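/- Let (R, m) be a Noetherian local Cohen–Macaulay ring of dimension d, let I = (f₁, …, f_d) be a parameter ideal, and let 𝓘 = (I_n)_{n≥0} be a multiplicative filtration of ideals with I ⊆ I₁ whose associated graded ring G = ⊕_{n≥0} I_n/I_{n+1} is Cohen–Macaulay with the initial forms x₁, …, x_d of f₁, …, f_d forming a regular sequence on G. Then for all integers k ≥ 0 and l ≥ 1, I_{k+l} ∩ (f₁^l, …, f_d^l) = I_k · (f₁^l, …, f_d^l). -/

import Mathlib

set_option linter.unusedSectionVars false

namespace VVaux

variable {R : Type*} [CommRing R]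

/-- Sum of `span {gᵢ} * 𝓘 (m - wᵢ)` over a list of pairs `(gᵢ, wᵢ)`. -/
def D (𝓘 : ℕ → Ideal R) : List (R × ℕ) → ℕ → Ideal R
  | [], _ => ⊥
  | p :: L, m => Ideal.span {p.1} * 𝓘 (m - p.2) ⊔ D 𝓘 L m

/-- `g` (of filtration degree `w`) has its initial form regular on `G/(init L)`,
element-wise. -/
def Rg (𝓘 : ℕ → Ideal R) (L : List (R × ℕ)) (g : R) (w : ℕ) : Prop :=
  ∀ n : ℕ, ∀ y ∈ 𝓘 n, g * y ∈ D 𝓘 L (n + w) ⊔ 𝓘 (n + w + 1) →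
    y ∈ D 𝓘 L n ⊔ 𝓘 (n + 1)

/-- Regular sequence (of initial forms), relative to a base list `B`. -/
def RgSeqOn (𝓘 : ℕ → Ideal R) : List (R × ℕ) → List (R × ℕ) → Prop
  | _, [] => True
  | B, p :: L => Rg 𝓘 B p.1 p.2 ∧ RgSeqOn 𝓘 (B ++ [p]) L

variable {𝓘 : ℕ → Ideal R}

section basic

variable (hmono : ∀ a b : ℕ, a ≤ b → 𝓘 b ≤ 𝓘 a)
variable (hmul : ∀ n m : ℕ, 𝓘 n * 𝓘 m ≤ 𝓘 (n + m))
include hmono hmul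

theorem memmul {a b : ℕ} {x y : R} (hx : x ∈ 𝓘 a) (hy : y ∈ 𝓘 b) :
    x * y ∈ 𝓘 (a + b) := hmul a b (Ideal.mul_mem_mul hx hy)

theorem D_mono {L : List (R × ℕ)} {m m' : ℕ} (h : m ≤ m') : D 𝓘 L m' ≤ D 𝓘 L m := by
  induction L with
  | nil => exact le_rfl
  | cons p L IH =>
      exact sup_le_sup (Ideal.mul_mono_right (hmono _ _ (Nat.sub_le_sub_right h _))) IH

theorem D_append {L₁ L₂ : List (R × ℕ)} {m : ℕ} :
    D 𝓘 (L₁ ++ L₂) m = D 𝓘 L₁ m ⊔ D 𝓘 L₂ m := by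
  induction L₁ with
  | nil => simp [D]
  | cons p L IH => simp [D, IH, sup_assoc]

theorem term_le_D {L : List (R × ℕ)} {p : R × ℕ} (hp : p ∈ L) {m : ℕ} :
    Ideal.span {p.1} * 𝓘 (m - p.2) ≤ D 𝓘 L m := by
  induction L with
  | nil => simp at hp
  | cons q L IH =>
      rcases List.mem_cons.1 hp with h | h
      · subst h; exact le_sup_left
      · exact le_sup_of_le_right (IH h)

theorem D_le {L : List (R × ℕ)} {m : ℕ} {K : Ideal R}
    (h : ∀ p ∈ L, Ideal.span {p.1} * 𝓘 (m - p.2) ≤ K) : D 𝓘 L m ≤ K := by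
  induction L with
  | nil => simp [D]
  | cons q L IH =>
      exact sup_le (h q List.mem_cons_self) (IH fun p hp => h p (List.mem_cons_of_mem _ hp))

theorem single_le_filt {g : R} {w m : ℕ} (hg : g ∈ 𝓘 w) :
    Ideal.span {g} * 𝓘 (m - w) ≤ 𝓘 m := by
  rw [Ideal.mul_le]
  intro r hr s hs
  rw [Ideal.mem_span_singleton] at hr
  obtain ⟨c, rfl⟩ := hr
  have h1 : g * (c * s) ∈ 𝓘 (w + (m - w)) :=
    memmul hmono hmul hg (Ideal.mul_mem_left _ _ hs)
  have h2 : g * (c * s) ∈ 𝓘 m := hmono _ _ (by omega) h1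
  convert h2 using 1; ring

theorem D_le_filt {L : List (R × ℕ)} {m : ℕ} (hL : ∀ p ∈ L, p.1 ∈ 𝓘 p.2) :
    D 𝓘 L m ≤ 𝓘 m :=
  D_le hmono hmul fun p hp => single_le_filt hmono hmul (hL p hp)

theorem smul_D {g : R} {w : ℕ} (hg : g ∈ 𝓘 w) {L : List (R × ℕ)} {m : ℕ}
    {x : R} (hx : x ∈ D 𝓘 L m) : g * x ∈ D 𝓘 L (m + w) := by
  induction L generalizing x with
  | nil => simp only [D, Ideal.mem_bot] at hx; simp [hx, D]
  | cons p L IH =>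
      rcases Submodule.mem_sup.1 hx with ⟨a, ha, b, hb, rfl⟩
      rw [mul_add]
      refine add_mem (le_sup_left (α := Ideal R) ?_) (le_sup_right (α := Ideal R) (IH hb))
      rw [Ideal.mem_span_singleton_mul] at ha
      obtain ⟨z, hz, rfl⟩ := ha
      have h1 : g * z ∈ 𝓘 ((m + w) - p.2) :=
        hmono _ _ (by omega) (memmul hmono hmul hg hz)
      have h2 := Ideal.mul_mem_mul (Ideal.mem_span_singleton_self p.1) h1
      convert h2 using 1; ring

theorem D_perm {L L' : List (R × ℕ)} (h : L.Perm L') (m : ℕ) : D 𝓘 L m = D 𝓘 L' m := by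
  induction h with
  | nil => rfl
  | cons x _ IH => simp [D, IH]
  | swap x y L => simp [D, sup_left_comm]
  | trans _ _ IH1 IH2 => rw [IH1, IH2]

theorem Rg_perm {L L' : List (R × ℕ)} (h : L.Perm L') {g : R} {w : ℕ}
    (hg : Rg 𝓘 L g w) : Rg 𝓘 L' g w := by
  intro n y hy hmem
  rw [← D_perm hmono hmul h] at hmem ⊢
  exact hg n y hy hmem

end basic


section swap
variable (hmono : ∀ a b : ℕ, a ≤ b → 𝓘 b ≤ 𝓘 a)
variable (hmul : ∀ n m : ℕ, 𝓘 n * 𝓘 m ≤ 𝓘 (n + m))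
include hmono hmul

/-- if `x` is regular mod `L` and `y` regular mod `L ++ [x]` then `y` is regular mod `L`
(graded Nakayama / swap, first half). -/
theorem swap1 {L : List (R × ℕ)} {x y : R} {wx wy : ℕ} (hx : x ∈ 𝓘 wx) (hy : y ∈ 𝓘 wy)
    (hwx : 1 ≤ wx) (h1 : Rg 𝓘 L x wx) (h2 : Rg 𝓘 (L ++ [(x, wx)]) y wy) :
    Rg 𝓘 L y wy := by
  intro n
  induction n using Nat.strong_induction_on with
  | _ n IH =>
  intro z hz hyz
  have hyz' : y * z ∈ D 𝓘 (L ++ [(x, wx)]) (n + wy) ⊔ 𝓘 (n + wy + 1) := by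
    rw [D_append hmono hmul]
    rcases Submodule.mem_sup.1 hyz with ⟨a, ha, b, hb, hab⟩
    rw [← hab]
    exact add_mem (le_sup_left (α := Ideal R) (le_sup_left (α := Ideal R) ha))
      (le_sup_right (α := Ideal R) hb)
  have hz2 := h2 n z hz hyz'
  rw [D_append hmono hmul] at hz2
  simp only [D, sup_bot_eq] at hz2
  rw [sup_assoc] at hz2
  rcases Submodule.mem_sup.1 hz2 with ⟨c, hc, r, hr, hczr⟩
  rcases Submodule.mem_sup.1 hr with ⟨q, hq, w, hw, hqw⟩
  rw [Ideal.mem_span_singleton_mul] at hq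
  obtain ⟨u, hu, rfl⟩ := hq
  by_cases hcase : n < wx
  · -- x * u ∈ 𝓘 wx ⊆ 𝓘 (n+1)
    have hxu : x * u ∈ 𝓘 (n + 1) := hmono _ _ (by omega) (Ideal.mul_mem_right _ _ hx)
    rw [← hczr, ← hqw]
    exact add_mem (le_sup_left (α := Ideal R) hc)
      (le_sup_right (α := Ideal R) (add_mem hxu hw))
  · push_neg at hcase
    -- x * (y * u) ∈ D L (n+wy) ⊔ 𝓘 (n+wy+1)
    have key : x * (y * u) ∈ D 𝓘 L (n + wy) ⊔ 𝓘 (n + wy + 1) := by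
      have e : x * (y * u) = y * z - y * c - y * w := by
        rw [← hczr, ← hqw]; ring
      rw [e]
      refine sub_mem (sub_mem hyz ?_) ?_
      · exact le_sup_left (α := Ideal R) (smul_D hmono hmul hy hc)
      · refine le_sup_right (α := Ideal R) (hmono _ _ (by omega) (memmul hmono hmul hy hw))
    -- apply h1 at degree (n - wx) + wy to y*u
    have hyu : y * u ∈ 𝓘 ((n - wx) + wy) := by
      have := memmul hmono hmul hy hu
      exact hmono _ _ (by omega) this
    have key2 : x * (y * u) ∈ D 𝓘 L (((n - wx) + wy) + wx) ⊔ 𝓘 (((n - wx) + wy) + wx + 1) := by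
      have e : ((n - wx) + wy) + wx = n + wy := by omega
      rw [e]; exact key
    have hyu2 := h1 _ _ hyu key2
    -- apply strong induction at degree n - wx to u
    have hu2 : u ∈ D 𝓘 L (n - wx) ⊔ 𝓘 ((n - wx) + 1) := by
      refine IH (n - wx) (by omega) u hu ?_
      exact hyu2
    -- conclude
    rw [← hczr, ← hqw]
    rcases Submodule.mem_sup.1 hu2 with ⟨du, hdu, wu, hwu, rfl⟩
    have hxdu : x * du ∈ D 𝓘 L n := by
      have := smul_D hmono hmul hx hdu
      have e : (n - wx) + wx = n := by omega
      rwa [e] at this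
    have hxwu : x * wu ∈ 𝓘 (n + 1) := hmono _ _ (by omega) (memmul hmono hmul hx hwu)
    have : x * (du + wu) = x * du + x * wu := by ring
    rw [this]
    exact add_mem (le_sup_left (α := Ideal R) hc) (add_mem (add_mem
      (le_sup_left (α := Ideal R) hxdu) (le_sup_right (α := Ideal R) hxwu))
      (le_sup_right (α := Ideal R) hw))

/-- swap, second half: `x` is regular mod `L ++ [y]`. -/
theorem swap2 {L : List (R × ℕ)} {x y : R} {wx wy : ℕ} (hx : x ∈ 𝓘 wx) (hy : y ∈ 𝓘 wy)
    (h1 : Rg 𝓘 L x wx) (h2 : Rg 𝓘 (L ++ [(x, wx)]) y wy) :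
    Rg 𝓘 (L ++ [(y, wy)]) x wx := by
  intro n z hz hxz
  rw [D_append hmono hmul] at hxz ⊢
  simp only [D, sup_bot_eq] at hxz ⊢
  rw [sup_assoc] at hxz
  rcases Submodule.mem_sup.1 hxz with ⟨c, hc, r, hr, hczr⟩
  rcases Submodule.mem_sup.1 hr with ⟨q, hq, w, hw, hqw⟩
  rw [Ideal.mem_span_singleton_mul] at hq
  obtain ⟨v, hv, rfl⟩ := hq
  by_cases hcase : n + wx < wy
  · have hyv : y * v ∈ 𝓘 (n + wx + 1) := hmono _ _ (by omega) (Ideal.mul_mem_right _ _ hy)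
    have hxz2 : x * z ∈ D 𝓘 L (n + wx) ⊔ 𝓘 (n + wx + 1) := by
      rw [← hczr, ← hqw]
      exact add_mem (le_sup_left (α := Ideal R) hc)
        (le_sup_right (α := Ideal R) (add_mem hyv hw))
    have := h1 n z hz hxz2
    rcases Submodule.mem_sup.1 this with ⟨a, ha, b, hb, rfl⟩
    exact add_mem (le_sup_left (α := Ideal R) (le_sup_left (α := Ideal R) ha))
      (le_sup_right (α := Ideal R) hb)
  · push_neg at hcase
    set nv := n + wx - wy with hnv
    -- apply h2 to v at degree nv
    have hv2 : v ∈ D 𝓘 (L ++ [(x, wx)]) nv ⊔ 𝓘 (nv + 1) := by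
      refine h2 nv v hv ?_
      have e : nv + wy = n + wx := by omega
      rw [e]
      have hyv : y * v = x * z - c - w := by rw [← hczr, ← hqw]; ring
      rw [hyv, D_append hmono hmul]
      have hxz3 : x * z ∈ D 𝓘 [(x, wx)] (n + wx) := by
        have : x * z ∈ Ideal.span {x} * 𝓘 ((n + wx) - wx) := by
          refine Ideal.mul_mem_mul (Ideal.mem_span_singleton_self x) ?_
          have e2 : (n + wx) - wx = n := by omega
          rw [e2]; exact hz
        simpa [D] using this
      refine sub_mem (sub_mem ?_ ?_) ?_
      · exact le_sup_left (α := Ideal R) (le_sup_right (α := Ideal R) hxz3)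
      · exact le_sup_left (α := Ideal R) (le_sup_left (α := Ideal R) hc)
      · exact le_sup_right (α := Ideal R) hw
    rw [D_append hmono hmul] at hv2
    simp only [D, sup_bot_eq] at hv2
    rw [sup_assoc] at hv2
    rcases Submodule.mem_sup.1 hv2 with ⟨cv, hcv, r2, hr2, hcvr⟩
    rcases Submodule.mem_sup.1 hr2 with ⟨q2, hq2, wv, hwv, hqwv⟩
    rw [Ideal.mem_span_singleton_mul] at hq2
    obtain ⟨u, hu, rfl⟩ := hq2
    -- z' := z - y*u
    have hyu : y * u ∈ 𝓘 n := hmono _ _ (by omega) (memmul hmono hmul hy hu)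
    have hz' : z - y * u ∈ 𝓘 n := sub_mem hz hyu
    have hxz' : x * (z - y * u) ∈ D 𝓘 L (n + wx) ⊔ 𝓘 (n + wx + 1) := by
      have e : x * (z - y * u) = c + y * cv + y * wv + w := by
        linear_combination -hczr - hqw - y * hcvr - y * hqwv
      rw [e]
      have hycv : y * cv ∈ D 𝓘 L (n + wx) := by
        have := smul_D hmono hmul hy hcv
        have e2 : nv + wy = n + wx := by omega
        rwa [e2] at this
      have hywv : y * wv ∈ 𝓘 (n + wx + 1) := by
        have := memmul hmono hmul hy hwv
        exact hmono _ _ (by omega) this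
      exact add_mem (add_mem (add_mem (le_sup_left (α := Ideal R) hc)
        (le_sup_left (α := Ideal R) hycv)) (le_sup_right (α := Ideal R) hywv))
        (le_sup_right (α := Ideal R) hw)
    have hfin := h1 n _ hz' hxz'
    rcases Submodule.mem_sup.1 hfin with ⟨a, ha, b, hb, hab⟩
    have hu' : u ∈ 𝓘 (n - wy) := hmono _ _ (by omega) hu
    have hyu' : y * u ∈ Ideal.span {y} * 𝓘 (n - wy) :=
      Ideal.mul_mem_mul (Ideal.mem_span_singleton_self y) hu'
    have hzz : z = a + (y * u + b) := by linear_combination -hab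
    rw [hzz, sup_assoc]
    exact add_mem (le_sup_left (α := Ideal R) ha)
      (le_sup_right (α := Ideal R) (add_mem (le_sup_left (α := Ideal R) hyu')
        (le_sup_right (α := Ideal R) hb)))
end swap

section seq
variable (hmono : ∀ a b : ℕ, a ≤ b → 𝓘 b ≤ 𝓘 a)
variable (hmul : ∀ n m : ℕ, 𝓘 n * 𝓘 m ≤ 𝓘 (n + m))
include hmono hmul

theorem Rg_mul {L : List (R × ℕ)} {g h : R} {wg wh : ℕ} (hh : h ∈ 𝓘 wh)
    (h1 : Rg 𝓘 L g wg) (h2 : Rg 𝓘 L h wh) : Rg 𝓘 L (g * h) (wg + wh) := by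
  intro n z hz hgz
  have hhz : h * z ∈ 𝓘 (n + wh) := by
    have := memmul hmono hmul hh hz
    exact hmono _ _ (by omega) this
  have step1 : h * z ∈ D 𝓘 L (n + wh) ⊔ 𝓘 (n + wh + 1) := by
    refine h1 (n + wh) (h * z) hhz ?_
    have e1 : g * (h * z) = g * h * z := by ring
    have e2 : n + wh + wg = n + (wg + wh) := by omega
    rw [e1, e2]
    exact hgz
  exact h2 n z hz step1

theorem Rg_pow {L : List (R × ℕ)} {g : R} (hg : g ∈ 𝓘 1) (h1 : Rg 𝓘 L g 1) :
    ∀ a : ℕ, 1 ≤ a → Rg 𝓘 L (g ^ a) a := by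
  intro a
  induction a with
  | zero => omega
  | succ a IH =>
      intro _
      by_cases ha : 1 ≤ a
      · have := Rg_mul hmono hmul hg (IH ha) h1
        rw [← pow_succ] at this
        exact this
      · have ha0 : a = 0 := by omega
        subst ha0
        simpa using h1

theorem pow_mem_filt {g : R} (hg : g ∈ 𝓘 1) (h0 : 𝓘 0 = ⊤) (a : ℕ) : g ^ a ∈ 𝓘 a := by
  induction a with
  | zero => rw [h0]; exact Submodule.mem_top
  | succ a IH => rw [pow_succ]; exact memmul hmono hmul IH hg

theorem RgSeqOn_append {B L₁ L₂ : List (R × ℕ)} :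
    RgSeqOn 𝓘 B (L₁ ++ L₂) ↔ RgSeqOn 𝓘 B L₁ ∧ RgSeqOn 𝓘 (B ++ L₁) L₂ := by
  induction L₁ generalizing B with
  | nil => simp [RgSeqOn]
  | cons p L IH =>
      simp only [List.cons_append, RgSeqOn, List.append_eq, IH, List.append_assoc,
        List.singleton_append, List.nil_append, and_assoc]

theorem RgSeqOn_base_perm {B B' L : List (R × ℕ)} (hB : B.Perm B')
    (h : RgSeqOn 𝓘 B L) : RgSeqOn 𝓘 B' L := by
  induction L generalizing B B' with
  | nil => trivial
  | cons p L IH =>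
      obtain ⟨h1, h2⟩ := h
      exact ⟨Rg_perm hmono hmul hB h1, IH (hB.append_right [p]) h2⟩

theorem RgSeqOn_perm {L L' : List (R × ℕ)} (hP : L.Perm L') :
    ∀ B : List (R × ℕ), (∀ p ∈ L, p.1 ∈ 𝓘 p.2 ∧ 1 ≤ p.2) →
    RgSeqOn 𝓘 B L → RgSeqOn 𝓘 B L' := by
  induction hP with
  | nil => intro B _ h; trivial
  | cons p hP IH =>
      intro B hwf h
      obtain ⟨h1, h2⟩ := h
      exact ⟨h1, IH (B ++ [p]) (fun q hq => hwf q (List.mem_cons_of_mem _ hq)) h2⟩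
  | swap p q L =>
      intro B hwf h
      obtain ⟨h1, h2, h3⟩ := h
      have hq1 : q.1 ∈ 𝓘 q.2 := (hwf q (by simp)).1
      have hq2 : 1 ≤ q.2 := (hwf q (by simp)).2
      have hp1 : p.1 ∈ 𝓘 p.2 := (hwf p (by simp)).1
      refine ⟨swap1 hmono hmul hq1 hp1 hq2 h1 h2, swap2 hmono hmul hq1 hp1 h1 h2, ?_⟩
      refine RgSeqOn_base_perm hmono hmul ?_ h3
      have hswap : (q :: p :: List.nil (α := R × ℕ)).Perm (p :: q :: []) := List.Perm.swap p q []
      have h4 := List.Perm.append_left B hswap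
      simpa using h4
  | trans hP1 hP2 IH1 IH2 =>
      intro B hwf h
      refine IH2 B (fun q hq => hwf q (hP1.mem_iff.2 hq)) (IH1 B hwf h)

end seq

section powseq
variable (hmono : ∀ a b : ℕ, a ≤ b → 𝓘 b ≤ 𝓘 a)
variable (hmul : ∀ n m : ℕ, 𝓘 n * 𝓘 m ≤ 𝓘 (n + m))
variable (h0 : 𝓘 0 = ⊤)
variable (f' : ℕ → R) (l d : ℕ) (hl : 1 ≤ l) (hf1 : ∀ j, f' j ∈ 𝓘 1)
variable (hbase : ∀ i < d, Rg 𝓘 ((List.range i).map fun t => (f' t, 1)) (f' i) 1)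
include hmono hmul h0 hl hf1 hbase

theorem powseq_main : ∀ j ≤ d, RgSeqOn 𝓘 []
    ((List.range j).map (fun t => (f' t ^ l, l)) ++
      (List.range (d - j)).map (fun t => (f' (j + t), 1))) := by
  intro j
  induction j with
  | zero =>
      intro _
      simp only [List.range_zero, List.map_nil, List.nil_append, Nat.sub_zero, Nat.zero_add]
      -- base sequence
      have base : ∀ i ≤ d, RgSeqOn 𝓘 [] ((List.range i).map fun t => (f' t, 1)) := by
        intro i
        induction i with
        | zero => intro _; trivial
        | succ i IH =>
            intro hi
            rw [List.range_succ, List.map_append]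
            refine (RgSeqOn_append hmono hmul).2 ⟨IH (by omega), ?_⟩
            exact ⟨by simpa using hbase i (by omega), trivial⟩
      simpa using base d le_rfl
  | succ j IH =>
      intro hj
      have hjd : j < d := by omega
      have H := IH (by omega)
      -- rewrite tail as cons
      have htail : (List.range (d - j)).map (fun t => (f' (j + t), 1)) =
          (f' j, 1) :: (List.range (d - (j + 1))).map (fun t => (f' ((j + 1) + t), 1)) := by
        have hfun : (fun t => (f' (j + t), (1:ℕ))) ∘ Nat.succ =
            fun t => (f' ((j + 1) + t), (1:ℕ)) := by
          funext t
          have : j + (t + 1) = j + 1 + t := by omega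
          simp [Function.comp, this]
        rw [show d - j = (d - (j + 1)) + 1 by omega, List.range_succ_eq_map, List.map_cons,
          List.map_map, hfun]
        simp
      rw [htail] at H
      set Tail := (List.range (d - (j + 1))).map (fun t => (f' ((j + 1) + t), 1)) with hT
      set Lp := (List.range j).map (fun t => (f' t ^ l, l)) with hLp
      have hwf : ∀ p ∈ ((f' j, 1) :: Tail), p.1 ∈ 𝓘 p.2 ∧ 1 ≤ p.2 := by
        intro p hp
        rcases List.mem_cons.1 hp with h | h
        · subst h; exact ⟨hf1 j, le_rfl⟩
        · rw [hT] at h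
          simp only [List.mem_map, List.mem_range] at h
          obtain ⟨t, _, rfl⟩ := h
          exact ⟨hf1 _, le_rfl⟩
      obtain ⟨H1, H2⟩ := (RgSeqOn_append hmono hmul).1 H
      simp only [List.nil_append] at H2
      have H2' : RgSeqOn 𝓘 Lp (Tail ++ [(f' j, 1)]) :=
        RgSeqOn_perm hmono hmul (List.perm_append_singleton _ _).symm Lp hwf H2
      obtain ⟨H3, H4⟩ := (RgSeqOn_append hmono hmul).1 H2'
      -- H4 : RgSeqOn (Lp ++ Tail) [(f' j, 1)], extract the Rg and raise the power
      have H4' : Rg 𝓘 (Lp ++ Tail) (f' j) 1 := H4.1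
      have H5 : Rg 𝓘 (Lp ++ Tail) (f' j ^ l) l := by
        simpa using Rg_pow hmono hmul (hf1 j) H4' l hl
      have H6 : RgSeqOn 𝓘 Lp (Tail ++ [(f' j ^ l, l)]) :=
        (RgSeqOn_append hmono hmul).2 ⟨H3, ⟨H5, trivial⟩⟩
      have hwf2 : ∀ p ∈ (Tail ++ [(f' j ^ l, l)]), p.1 ∈ 𝓘 p.2 ∧ 1 ≤ p.2 := by
        intro p hp
        rcases List.mem_append.1 hp with h | h
        · rw [hT] at h
          simp only [List.mem_map, List.mem_range] at h
          obtain ⟨t, _, rfl⟩ := h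
          exact ⟨hf1 _, le_rfl⟩
        · simp only [List.mem_singleton] at h
          subst h
          exact ⟨pow_mem_filt hmono hmul (hf1 j) h0 l, hl⟩
      have H7 : RgSeqOn 𝓘 Lp ((f' j ^ l, l) :: Tail) :=
        RgSeqOn_perm hmono hmul (List.perm_append_singleton _ _) Lp hwf2 H6
      refine (RgSeqOn_append hmono hmul).2 ⟨?_, ?_⟩
      · rw [List.range_succ, List.map_append]
        refine (RgSeqOn_append hmono hmul).2 ⟨H1, ?_⟩
        simp only [List.nil_append]
        obtain ⟨h7a, _⟩ := H7
        exact ⟨h7a, trivial⟩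
      · rw [List.range_succ, List.map_append]
        simp only [List.nil_append, List.map_cons]
        obtain ⟨_, h7b⟩ := H7
        refine RgSeqOn_base_perm hmono hmul ?_ h7b
        simp [hLp]

theorem powseq : ∀ i < d, Rg 𝓘 ((List.range i).map fun t => (f' t ^ l, l)) (f' i ^ l) l := by
  intro i hi
  have H := powseq_main hmono hmul h0 f' l d hl hf1 hbase d le_rfl
  simp only [Nat.sub_self, List.range_zero, List.map_nil, List.append_nil] at H
  -- restrict to the prefix range (i+1)
  have key : ∀ m, m ≤ d → RgSeqOn 𝓘 [] ((List.range m).map fun t => (f' t ^ l, l)) → i < m →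
      Rg 𝓘 ((List.range i).map fun t => (f' t ^ l, l)) (f' i ^ l) l := by
    intro m
    induction m with
    | zero => omega
    | succ m IHm =>
        intro hm hseq him
        rw [List.range_succ, List.map_append] at hseq
        obtain ⟨hs1, hs2⟩ := (RgSeqOn_append hmono hmul).1 hseq
        by_cases hcase : i < m
        · exact IHm (by omega) hs1 hcase
        · have : i = m := by omega
          subst this
          simp only [List.nil_append] at hs2
          exact hs2.1
  exact key d le_rfl H hi

end powseq

section bump
variable (hmono : ∀ a b : ℕ, a ≤ b → 𝓘 b ≤ 𝓘 a)
variable (hmul : ∀ n m : ℕ, 𝓘 n * 𝓘 m ≤ 𝓘 (n + m))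
variable (h0 : 𝓘 0 = ⊤)
variable (f' : ℕ → R) (l d : ℕ) (hl : 1 ≤ l) (hf1 : ∀ j, f' j ∈ 𝓘 1)
include hmono hmul h0 hl hf1

theorem D_extract : ∀ (i m : ℕ) (x : R),
    x ∈ D 𝓘 ((List.range i).map fun t => (f' t ^ l, l)) m →
    ∃ u : ℕ → R, (∀ j, u j ∈ 𝓘 (m - l)) ∧ x = ∑ j ∈ Finset.range i, f' j ^ l * u j := by
  intro i
  induction i with
  | zero =>
      intro m x hx
      simp only [List.range_zero, List.map_nil, D, Ideal.mem_bot] at hx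
      exact ⟨fun _ => 0, fun j => zero_mem _, by simp [hx]⟩
  | succ i IH =>
      intro m x hx
      rw [List.range_succ, List.map_append, D_append hmono hmul] at hx
      simp only [List.map_cons, List.map_nil, D, sup_bot_eq] at hx
      rcases Submodule.mem_sup.1 hx with ⟨a, ha, b, hb, hab⟩
      obtain ⟨u, hu, hrep⟩ := IH m a ha
      rw [Ideal.mem_span_singleton_mul] at hb
      obtain ⟨v, hv, hbv⟩ := hb
      refine ⟨Function.update u i v, ?_, ?_⟩
      · intro j
        rcases eq_or_ne j i with h | h
        · subst h; rw [Function.update_self]; exact hv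
        · rw [Function.update_of_ne h]; exact hu j
      · rw [Finset.sum_range_succ, Function.update_self, ← hab, hrep, ← hbv]
        congr 1
        refine Finset.sum_congr rfl fun j hj => ?_
        rw [Function.update_of_ne (by simpa using Nat.ne_of_lt (Finset.mem_range.1 hj))]

theorem term_mem_D {c : R} {s : ℕ} (hc : c ∈ 𝓘 s) {j i : ℕ} (hj : j < i) :
    f' j ^ l * c ∈ D 𝓘 ((List.range i).map fun t => (f' t ^ l, l)) (s + l) := by
  have hmem : ((f' j ^ l, l) : R × ℕ) ∈ (List.range i).map fun t => (f' t ^ l, l) :=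
    List.mem_map.2 ⟨j, List.mem_range.2 hj, rfl⟩
  have hle := term_le_D hmono hmul hmem (m := s + l)
  have : f' j ^ l * c ∈ Ideal.span {f' j ^ l} * 𝓘 ((s + l) - l) := by
    rw [Nat.add_sub_cancel]
    exact Ideal.mul_mem_mul (Ideal.mem_span_singleton_self _) hc
  exact hle this

theorem bump {k s : ℕ} (hs : s + 1 ≤ k)
    (hpow : ∀ i < d, Rg 𝓘 ((List.range i).map fun t => (f' t ^ l, l)) (f' i ^ l) l) :
    ∀ i, i ≤ d → ∀ c : ℕ → R, (∀ j, c j ∈ 𝓘 s) → (∀ j, i ≤ j → c j ∈ 𝓘 (s + 1)) →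
    (∑ j ∈ Finset.range d, f' j ^ l * c j) ∈ 𝓘 (k + l) →
    ∃ c' : ℕ → R, (∀ j, c' j ∈ 𝓘 (s + 1)) ∧ (∀ j, d ≤ j → c' j = c j) ∧
      ∑ j ∈ Finset.range d, f' j ^ l * c' j = ∑ j ∈ Finset.range d, f' j ^ l * c j := by
  intro i
  induction i with
  | zero =>
      intro _ c h1 h2 _
      exact ⟨c, fun j => h2 j (Nat.zero_le j), fun j _ => rfl, rfl⟩
  | succ i IH =>
      intro hi c h1 h2 hsum
      have hid : i < d := by omega
      have hsplit : ∀ g : ℕ → R,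
          ∑ j ∈ Finset.range d, g j =
            ((∑ j ∈ Finset.range i, g j) + g i) + ∑ j ∈ Finset.Ico (i + 1) d, g j := by
        intro g
        rw [← Finset.sum_range_succ]
        exact (Finset.sum_range_add_sum_Ico g (by omega)).symm
      have hA : (∑ j ∈ Finset.range i, f' j ^ l * c j) ∈
          D 𝓘 ((List.range i).map fun t => (f' t ^ l, l)) (s + l) := by
        refine Submodule.sum_mem _ fun j hj => ?_
        exact term_mem_D hmono hmul h0 f' l hl hf1 (h1 j) (Finset.mem_range.1 hj)
      have hB : (∑ j ∈ Finset.Ico (i + 1) d, f' j ^ l * c j) ∈ 𝓘 (s + l + 1) := by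
        refine Submodule.sum_mem _ fun j hj => ?_
        have hj1 := (Finset.mem_Ico.1 hj).1
        have : f' j ^ l * c j ∈ 𝓘 (l + (s + 1)) :=
          memmul hmono hmul (pow_mem_filt hmono hmul (hf1 j) h0 l) (h2 j (by omega))
        exact hmono _ _ (by omega) this
      have hci : f' i ^ l * c i ∈
          D 𝓘 ((List.range i).map fun t => (f' t ^ l, l)) (s + l) ⊔ 𝓘 (s + l + 1) := by
        have e : f' i ^ l * c i =
            (∑ j ∈ Finset.range d, f' j ^ l * c j) - (∑ j ∈ Finset.range i, f' j ^ l * c j)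
              - ∑ j ∈ Finset.Ico (i + 1) d, f' j ^ l * c j := by
          rw [hsplit (fun j => f' j ^ l * c j)]; ring
        rw [e]
        refine sub_mem (sub_mem ?_ (le_sup_left (α := Ideal R) hA))
          (le_sup_right (α := Ideal R) hB)
        exact le_sup_right (α := Ideal R) (hmono _ _ (by omega) hsum)
      have hci2 := hpow i hid s (c i) (h1 i) hci
      rcases Submodule.mem_sup.1 hci2 with ⟨e0, he0, v, hv, hev⟩
      obtain ⟨u, hu, hurep⟩ := D_extract hmono hmul h0 f' l hl hf1 i s e0 he0
      set c'' : ℕ → R := fun j => if j < i then c j + u j * f' i ^ l else if j = i then v else c j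
        with hc''
      have hc''1 : ∀ j, c'' j ∈ 𝓘 s := by
        intro j
        simp only [hc'']
        by_cases hji : j < i
        · rw [if_pos hji]
          have hm := memmul hmono hmul (hu j) (pow_mem_filt hmono hmul (hf1 i) h0 l)
          exact add_mem (h1 j) (hmono _ _ (by omega) hm)
        · rw [if_neg hji]
          by_cases hje : j = i
          · rw [if_pos hje]; exact hmono _ _ (by omega) hv
          · rw [if_neg hje]; exact h1 j
      have hc''2 : ∀ j, i ≤ j → c'' j ∈ 𝓘 (s + 1) := by
        intro j hj
        simp only [hc'']
        rw [if_neg (by omega)]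
        by_cases hje : j = i
        · rw [if_pos hje]; exact hv
        · rw [if_neg hje]; exact h2 j (by omega)
      have hsum'' : ∑ j ∈ Finset.range d, f' j ^ l * c'' j
          = ∑ j ∈ Finset.range d, f' j ^ l * c j := by
        rw [hsplit (fun j => f' j ^ l * c'' j), hsplit (fun j => f' j ^ l * c j)]
        have e1 : ∑ j ∈ Finset.range i, f' j ^ l * c'' j
            = (∑ j ∈ Finset.range i, f' j ^ l * c j) + e0 * f' i ^ l := by
          rw [hurep, Finset.sum_mul, ← Finset.sum_add_distrib]
          refine Finset.sum_congr rfl fun j hj => ?_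
          simp only [hc'']
          rw [if_pos (Finset.mem_range.1 hj)]
          ring
        have e2 : f' i ^ l * c'' i = f' i ^ l * v := by
          simp [hc'']
        have e3 : ∑ j ∈ Finset.Ico (i + 1) d, f' j ^ l * c'' j
            = ∑ j ∈ Finset.Ico (i + 1) d, f' j ^ l * c j := by
          refine Finset.sum_congr rfl fun j hj => ?_
          have hj1 := (Finset.mem_Ico.1 hj).1
          simp only [hc'']
          rw [if_neg (by omega), if_neg (by omega)]
        rw [e1, e2, e3, ← hev]
        ring
      have hpres : ∀ j, d ≤ j → c'' j = c j := by
        intro j hj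
        simp only [hc'']
        rw [if_neg (by omega), if_neg (by omega)]
      obtain ⟨c', hc'1, hc'p, hc'2⟩ := IH (by omega) c'' hc''1 hc''2 (by rw [hsum'']; exact hsum)
      exact ⟨c', hc'1, fun j hj => (hc'p j hj).trans (hpres j hj), by rw [hc'2, hsum'']⟩

theorem outer {k : ℕ} {J : Ideal R} (hJmem : ∀ j < d, f' j ^ l ∈ J)
    (hpow : ∀ i < d, Rg 𝓘 ((List.range i).map fun t => (f' t ^ l, l)) (f' i ^ l) l) :
    ∀ t s : ℕ, ∀ c : ℕ → R, k ≤ s + t → (∀ j, c j ∈ 𝓘 s) → (∀ j, d ≤ j → c j = 0) →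
    (∑ j ∈ Finset.range d, f' j ^ l * c j) ∈ 𝓘 (k + l) →
    (∑ j ∈ Finset.range d, f' j ^ l * c j) ∈ 𝓘 k * J := by
  have base : ∀ s : ℕ, k ≤ s → ∀ c : ℕ → R, (∀ j, c j ∈ 𝓘 s) →
      (∑ j ∈ Finset.range d, f' j ^ l * c j) ∈ 𝓘 k * J := by
    intro s hk c h1
    refine Submodule.sum_mem _ fun j hj => ?_
    rw [mul_comm (f' j ^ l) (c j)]
    exact Ideal.mul_mem_mul (hmono _ _ hk (h1 j)) (hJmem j (Finset.mem_range.1 hj))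
  intro t
  induction t with
  | zero =>
      intro s c hk h1 _ _
      exact base s (by omega) c h1
  | succ t IH =>
      intro s c hk h1 h2 hsum
      by_cases hcase : k ≤ s
      · exact base s hcase c h1
      · obtain ⟨c', hc'1, hc'p, hc'2⟩ :=
          bump hmono hmul h0 f' l d hl hf1 (k := k) (s := s) (by omega) hpow d le_rfl c h1
            (fun j hj => by rw [h2 j hj]; exact zero_mem _) hsum
        have := IH (s + 1) c' (by omega) hc'1
          (fun j hj => (hc'p j hj).trans (h2 j hj)) (by rw [hc'2]; exact hsum)
        rw [hc'2] at this
        exact this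

theorem final {k : ℕ} {J : Ideal R}
    (hbase : ∀ i < d, Rg 𝓘 ((List.range i).map fun t => (f' t, 1)) (f' i) 1)
    (hJmem : ∀ j < d, f' j ^ l ∈ J)
    (hJrep : ∀ x ∈ J, ∃ c : ℕ → R, (∀ j, d ≤ j → c j = 0) ∧
      x = ∑ j ∈ Finset.range d, f' j ^ l * c j)
    (hJle : J ≤ 𝓘 l) : 𝓘 (k + l) ⊓ J = 𝓘 k * J := by
  have hpow := powseq hmono hmul h0 f' l d hl hf1 hbase
  apply le_antisymm
  · rintro x ⟨hx1, hx2⟩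
    obtain ⟨c, hc0, rfl⟩ := hJrep x hx2
    refine outer hmono hmul h0 f' l d hl hf1 hJmem hpow k 0 c (by omega) ?_ ?_ hx1
    · intro j; simp [h0]
    · intro j hj; exact hc0 j hj
  · refine le_inf ?_ Ideal.mul_le_right
    calc 𝓘 k * J ≤ 𝓘 k * 𝓘 l := Ideal.mul_mono_right hJle
      _ ≤ 𝓘 (k + l) := hmul k l

end bump
end VVaux


/-- Valabrega–Valla type statement.  Let `(R,m)` be a Noetherian Cohen–Macaulay local
ring of dimension `d` (Cohen–Macaulayness expressed as the existence of a regular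
sequence of length `d` in `m`), `I = (f₁,…,f_d)` a parameter ideal, and `𝓘 = (I_n)` a
multiplicative filtration with `I ⊆ I₁` whose initial forms `x₁,…,x_d` of the `fᵢ` form
a regular sequence on the associated graded ring `G = ⊕ I_n/I_{n+1}` (expressed
element-wise in terms of the filtration).  Then for all `k ≥ 0` and `l ≥ 1`,
`I_{k+l} ∩ (f₁^l,…,f_d^l) = I_k·(f₁^l,…,f_d^l)`. -/
theorem stmt12 {R : Type*} [CommRing R] [IsNoetherianRing R] [IsLocalRing R]
    {d : ℕ} (hdim : (d : WithBot ℕ∞) = ringKrullDim R)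
    (hCM : ∃ rs : List R, (∀ r ∈ rs, r ∈ IsLocalRing.maximalIdeal R) ∧
      RingTheory.Sequence.IsRegular R rs ∧ (rs.length : WithBot ℕ∞) = ringKrullDim R)
    (f : Fin d → R)
    (hparam : (Ideal.span (Set.range f)).radical = IsLocalRing.maximalIdeal R)
    (𝓘 : ℕ → Ideal R) (h0 : 𝓘 0 = ⊤) (hdec : ∀ n, 𝓘 (n + 1) ≤ 𝓘 n)
    (hmul : ∀ n m : ℕ, 𝓘 n * 𝓘 m ≤ 𝓘 (n + m))
    (hI1 : Ideal.span (Set.range f) ≤ 𝓘 1)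
    -- the initial forms of `f₁,…,f_d` form a regular sequence on the associated graded
    -- ring of the filtration, written out element-wise:
    (hregG : ∀ (i : Fin d) (n : ℕ), ∀ y ∈ 𝓘 n,
      f i * y ∈ (⨆ j : Fin d, ⨆ _ : j < i, Ideal.span {f j} * 𝓘 n) ⊔ 𝓘 (n + 2) →
      y ∈ (⨆ j : Fin d, ⨆ _ : j < i, Ideal.span {f j} * 𝓘 (n - 1)) ⊔ 𝓘 (n + 1)) :
    ∀ (k l : ℕ), 1 ≤ l →
      𝓘 (k + l) ⊓ Ideal.span (Set.range fun i => f i ^ l) =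
        𝓘 k * Ideal.span (Set.range fun i => f i ^ l) := by
  intro k l hl
  classical
  set f' : ℕ → R := fun j => if h : j < d then f ⟨j, h⟩ else 0 with hf'
  have hmono : ∀ a b : ℕ, a ≤ b → 𝓘 b ≤ 𝓘 a := by
    intro a b h
    induction h with
    | refl => exact le_rfl
    | step _ IH => exact le_trans (hdec _) IH
  have hfeq : ∀ (j : ℕ) (h : j < d), f' j = f ⟨j, h⟩ := by
    intro j h
    simp only [hf']
    rw [dif_pos h]
  have hf1 : ∀ j, f' j ∈ 𝓘 1 := by
    intro j
    by_cases h : j < d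
    · rw [hfeq j h]
      exact hI1 (Ideal.subset_span ⟨⟨j, h⟩, rfl⟩)
    · simp only [hf']
      rw [dif_neg h]
      exact zero_mem _
  have hDsup : ∀ (i : ℕ) (hi : i < d) (m : ℕ),
      VVaux.D 𝓘 ((List.range i).map fun t => (f' t, 1)) m =
      ⨆ j : Fin d, ⨆ _ : j < (⟨i, hi⟩ : Fin d), Ideal.span {f j} * 𝓘 (m - 1) := by
    intro i hi m
    apply le_antisymm
    · refine VVaux.D_le hmono hmul ?_
      intro p hp
      simp only [List.mem_map, List.mem_range] at hp
      obtain ⟨t, ht, rfl⟩ := hp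
      have htd : t < d := lt_trans ht hi
      have h1 : Ideal.span {f' t} * 𝓘 (m - 1) ≤
          ⨆ _ : (⟨t, htd⟩ : Fin d) < ⟨i, hi⟩, Ideal.span {f ⟨t, htd⟩} * 𝓘 (m - 1) := by
        rw [hfeq t htd]
        exact le_iSup (fun _ => Ideal.span {f ⟨t, htd⟩} * 𝓘 (m - 1))
          (show (⟨t, htd⟩ : Fin d) < ⟨i, hi⟩ from by simpa [Fin.mk_lt_mk] using ht)
      exact le_trans h1 (le_iSup
        (fun j : Fin d => ⨆ _ : j < (⟨i, hi⟩ : Fin d), Ideal.span {f j} * 𝓘 (m - 1)) ⟨t, htd⟩)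
    · refine iSup_le fun j => iSup_le fun hj => ?_
      have hji : j.1 < i := hj
      have hjmem : ((f j, 1) : R × ℕ) ∈ (List.range i).map fun t => (f' t, 1) := by
        refine List.mem_map.2 ⟨j.1, List.mem_range.2 hji, ?_⟩
        rw [hfeq j.1 j.2]
      have := VVaux.term_le_D hmono hmul hjmem (m := m)
      simpa using this
  have hbase : ∀ i < d, VVaux.Rg 𝓘 ((List.range i).map fun t => (f' t, 1)) (f' i) 1 := by
    intro i hi n y hy hmem
    rw [hDsup i hi n]
    have hmem' : f ⟨i, hi⟩ * y ∈
        (⨆ j : Fin d, ⨆ _ : j < (⟨i, hi⟩ : Fin d), Ideal.span {f j} * 𝓘 n) ⊔ 𝓘 (n + 2) := by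
      rw [← hfeq i hi]
      rw [hDsup i hi (n + 1)] at hmem
      simpa using hmem
    exact hregG ⟨i, hi⟩ n y hy hmem'
  have hJmem : ∀ j < d, f' j ^ l ∈ Ideal.span (Set.range fun i => f i ^ l) := by
    intro j h
    rw [hfeq j h]
    exact Ideal.subset_span ⟨⟨j, h⟩, rfl⟩
  have hJrep : ∀ x ∈ Ideal.span (Set.range fun i => f i ^ l),
      ∃ c : ℕ → R, (∀ j, d ≤ j → c j = 0) ∧
        x = ∑ j ∈ Finset.range d, f' j ^ l * c j := by
    intro x hx
    obtain ⟨c, hc⟩ := (Submodule.mem_span_range_iff_exists_fun R).1 hx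
    refine ⟨fun j => if h : j < d then c ⟨j, h⟩ else 0, fun j hj => dif_neg (by omega), ?_⟩
    rw [← hc,
      ← Fin.sum_univ_eq_sum_range (fun j => f' j ^ l * if h : j < d then c ⟨j, h⟩ else 0) d]
    refine Finset.sum_congr rfl fun i _ => ?_
    rw [dif_pos i.2, hfeq i.1 i.2]
    simp only [Fin.eta, smul_eq_mul]
    ring
  have hJle : Ideal.span (Set.range fun i => f i ^ l) ≤ 𝓘 l := by
    rw [Ideal.span_le]
    rintro _ ⟨i, rfl⟩
    exact VVaux.pow_mem_filt hmono hmul (hI1 (Ideal.subset_span ⟨i, rfl⟩)) h0 l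
  exact VVaux.final hmono hmul h0 f' l d hl hf1 hbase hJmem hJrep hJle
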